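/- arXiv:1902.03852 — 2 statements merged into one kernel-verified Lean document; each statement's English description precedes it below -/
import Mathlib

section
/- Let P ⊆ nA* be a finite maximal joinless code. Then every w ∈ nA^ω has a unique initial factor in P; i.e. for every w ∈ nA^ω there exist a unique p ∈ P and a (then unique) u ∈ nA^ω such that w = p·u. -/
namespace BrinThompson

abbrev W (A : Type*) (n : ℕ) : Type _ := Fin n → List A

variable {A : Type*} {n : ℕ}

/-- Coordinatewise concatenation in `nA*`. -/
def cat (u x : W A n) : W A n := fun i => u i ++ x i

/-- `u ≤_init v` : `u` is an initial factor of `v`. -/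
def initLE (u v : W A n) : Prop := ∃ x : W A n, v = cat u x

/-- `w` is the join (least upper bound) of `u` and `v` w.r.t. `≤_init`. -/
def isJoin (u v w : W A n) : Prop :=
  initLE u w ∧ initLE v w ∧ ∀ z : W A n, initLE u z → initLE v z → initLE w z

/-- `u` and `v` have a join. -/
def HasJoin (u v : W A n) : Prop := ∃ w : W A n, isJoin u v w

/-- A joinless code: no two distinct elements have a join. -/
def JoinlessCode (S : Set (W A n)) : Prop :=
  ∀ u ∈ S, ∀ v ∈ S, u ≠ v → ¬ HasJoin u v

/-- A maximal joinless code: joinless, and every element of `nA*` has a join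
with some element of the code. -/
def MaxJoinlessCode (S : Set (W A n)) : Prop :=
  JoinlessCode S ∧ ∀ x : W A n, ∃ p ∈ S, HasJoin x p

/-- The right ideal `C · nA*` generated by `C`. -/
def genIdeal (C : Set (W A n)) : Set (W A n) := {w | ∃ c ∈ C, ∃ x : W A n, w = cat c x}

def IsRightIdeal (R : Set (W A n)) : Prop := genIdeal R = R

/-- An initial factor code: pairwise `≤_init`-incomparable set. -/
def InitFactorCode (S : Set (W A n)) : Prop :=
  ∀ u ∈ S, ∀ v ∈ S, initLE u v → u = v

/-- `A_{ε,n}`: tuples with one coordinate a single letter and the rest empty. -/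
def Aeps (A : Type*) (n : ℕ) : Set (W A n) :=
  {w | ∃ i : Fin n, ∃ a : A, w i = [a] ∧ ∀ j : Fin n, j ≠ i → w j = []}

/-- `(ε)^n`, the tuple of empty strings. -/
def epsn (A : Type*) (n : ℕ) : W A n := fun _ => []

/-- `nA^ω`: `n`-tuples of one-sided infinite sequences over `A`. -/
abbrev Winf (A : Type*) (n : ℕ) : Type _ := Fin n → ℕ → A

/-- Concatenation of a finite tuple `p ∈ nA*` with an infinite tuple `u ∈ nA^ω`. -/
def catInf (p : W A n) (u : Winf A n) : Winf A n :=
  fun i k => if h : k < (p i).length then (p i).get ⟨k, h⟩ else u i (k - (p i).length)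

/-- `v` is an interior vertex of the `P`-dag: a strict initial factor of
some element of `P`. -/
def Interior (P : Set (W A n)) (v : W A n) : Prop := ∃ p ∈ P, initLE v p ∧ v ≠ p

/-- The child of `v` in direction `i`, extended by letter `a`. -/
def child (v : W A n) (i : Fin n) (a : A) : W A n := Function.update v i (v i ++ [a])

/-- A leaf of the interior dag of `P`: an interior vertex none of whose
children is interior. -/
def InteriorLeaf (P : Set (W A n)) (v : W A n) : Prop :=
  Interior P v ∧ ∀ (i : Fin n) (a : A), ¬ Interior P (child v i a)

/-- `v_+ = (v · A_{ε,n}) ∩ P`, the set of children of `v` belonging to `P`. -/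
def vplus (P : Set (W A n)) (v : W A n) : Set (W A n) :=
  {w | (∃ (i : Fin n) (a : A), w = child v i a) ∧ w ∈ P}

/-- The depth of a vertex: the sum of the coordinate lengths. -/
def depth (v : W A n) : ℕ := ∑ i, (v i).length

/-- One-step restriction of `P` at `(p, i)`. -/
def oneStep (P : Set (W A n)) (p : W A n) (i : Fin n) : Set (W A n) :=
  (P \ {p}) ∪ {w | ∃ a : A, w = child p i a}

/-- One step in a sequence of one-step restrictions. -/
def RestrStep (P Q : Set (W A n)) : Prop := ∃ p ∈ P, ∃ i : Fin n, Q = oneStep P p i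

/-- The box code `A^{k_1} × … × A^{k_n}`. -/
def box (A : Type*) {n : ℕ} (k : Fin n → ℕ) : Set (W A n) :=
  {w | ∀ i : Fin n, (w i).length = k i}

/-- Elementwise join `P ∨ Q` of two sets, ranging over the joins that exist. -/
def setJoin (P Q : Set (W A n)) : Set (W A n) :=
  {w | ∃ p ∈ P, ∃ q ∈ Q, isJoin p q w}

/-- `ℓ(S)`: the maximum coordinate length occurring in `S`. -/
noncomputable def ell (S : Set (W A n)) : ℕ :=
  sSup {m | ∃ z ∈ S, ∃ i : Fin n, (z i).length = m}

/-- An element of `n RI^fin_A`: an injective right ideal morphism of `nA*`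
whose domain code and image code are finite maximal joinless codes.
`toFun` is a total function whose values outside `Dom` are irrelevant. -/
structure RIMfin (A : Type*) (n : ℕ) where
  Dom : Set (W A n)
  toFun : W A n → W A n
  domC : Set (W A n)
  imC : Set (W A n)
  ideal : IsRightIdeal Dom
  morph : ∀ x ∈ Dom, ∀ w : W A n, toFun (cat x w) = cat (toFun x) w
  inj : Set.InjOn toFun Dom
  domC_gen : genIdeal domC = Dom
  imC_gen : genIdeal imC = toFun '' Dom
  domC_fin : domC.Finite
  domC_max : MaxJoinlessCode domC
  imC_fin : imC.Finite
  imC_max : MaxJoinlessCode imC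

/-- `ℓ(f) = max{ℓ(z) : z ∈ domC(f) ∪ imC(f)}`. -/
noncomputable def ellF (F : RIMfin A n) : ℕ := ell (F.domC ∪ F.imC)

/-- `G` extends `F` (as partial functions). -/
def Extends (F G : RIMfin A n) : Prop :=
  F.Dom ⊆ G.Dom ∧ ∀ x ∈ F.Dom, G.toFun x = F.toFun x

/-- `F` and `G` are equal as partial functions. -/
def EquivRIM (F G : RIMfin A n) : Prop :=
  F.Dom = G.Dom ∧ ∀ x ∈ F.Dom, F.toFun x = G.toFun x

/-- `G` is a maximal extension of `F` in `n RI^fin_A`. -/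
def MaxExtension (F G : RIMfin A n) : Prop :=
  Extends F G ∧ ∀ H : RIMfin A n, Extends G H → EquivRIM G H


/-- Pointwise characterization of being an initial factor of an infinite word. -/
lemma prefInf_iff (p : W A n) (w : Winf A n) :
    (∃ u : Winf A n, w = catInf p u) ↔
      ∀ (i : Fin n) (k : ℕ) (h : k < (p i).length), w i k = (p i).get ⟨k, h⟩ := by
  constructor
  · rintro ⟨u, rfl⟩ i k h
    simp [catInf, h]
  · intro H
    refine ⟨fun i k => w i (k + (p i).length), ?_⟩
    funext i k
    by_cases h : k < (p i).length
    · simp only [catInf, dif_pos h]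
      exact H i k h
    · simp only [catInf, dif_neg h]
      congr 1
      omega

/-- Initial factor order is coordinatewise list-prefix. -/
lemma initLE_iff (u v : W A n) : initLE u v ↔ ∀ i, u i <+: v i := by
  constructor
  · rintro ⟨x, rfl⟩ i
    exact ⟨x i, rfl⟩
  · intro h
    refine ⟨fun i => (h i).choose, ?_⟩
    funext i
    exact ((h i).choose_spec).symm

lemma prefix_of_pointwise {p q : List A} {wi : ℕ → A}
    (hp : ∀ (k : ℕ) (h : k < p.length), wi k = p.get ⟨k, h⟩)
    (hq : ∀ (k : ℕ) (h : k < q.length), wi k = q.get ⟨k, h⟩)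
    (hlen : p.length ≤ q.length) : p <+: q := by
  have : p = q.take p.length := by
    apply List.ext_get
    · simp [hlen]
    · intro k h1 h2
      have hkq : k < q.length := lt_of_lt_of_le h1 hlen
      have e1 := hp k h1
      have e2 := hq k hkq
      simp only [List.get_eq_getElem] at e1 e2
      simp only [List.get_eq_getElem, List.getElem_take, ← e1, ← e2]
  rw [this]
  exact List.take_prefix _ _

/-- Two initial factors of the same infinite word have a join. -/
lemma hasJoin_of_prefInf {p q : W A n} {w : Winf A n}
    (hp : ∃ u, w = catInf p u) (hq : ∃ u, w = catInf q u) : HasJoin p q := by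
  rw [prefInf_iff] at hp hq
  refine ⟨fun i => if (p i).length ≤ (q i).length then q i else p i, ?_, ?_, ?_⟩
  · rw [initLE_iff]
    intro i
    by_cases h : (p i).length ≤ (q i).length
    · simpa [h] using prefix_of_pointwise (hp i) (hq i) h
    · simp [h]
  · rw [initLE_iff]
    intro i
    by_cases h : (p i).length ≤ (q i).length
    · simp [h]
    · simpa [h] using prefix_of_pointwise (hq i) (hp i) (le_of_not_ge h)
  · intro z hpz hqz
    rw [initLE_iff] at hpz hqz ⊢
    intro i
    by_cases h : (p i).length ≤ (q i).length
    · simpa [h] using hqz i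
    · simpa [h] using hpz i

lemma catInf_shift (p : W A n) (u : Winf A n) (i : Fin n) (k : ℕ) :
    catInf p u i (k + (p i).length) = u i k := by
  simp only [catInf]
  rw [dif_neg (by omega)]
  congr 1
  omega

/-- Every `w ∈ nA^ω` has a unique initial factor in a finite maximal joinless
code `P`: there is a unique pair `(p, u)` with `p ∈ P` and `w = p·u`. -/
theorem unique_initFactor_of_maxJoinless {A : Type*} [Fintype A] [Nonempty A]
    {n : ℕ} (hn : 1 ≤ n) (P : Set (W A n)) (hfin : P.Finite)
    (hmax : MaxJoinlessCode P) (w : Winf A n) :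
    ∃! pu : W A n × Winf A n, pu.1 ∈ P ∧ w = catInf pu.1 pu.2 := by
  classical
  -- a bound on coordinate lengths in P
  set L : ℕ := hfin.toFinset.sup (fun p => Finset.univ.sup fun i => (p i).length) with hL
  have hbound : ∀ p ∈ P, ∀ i : Fin n, (p i).length ≤ L := by
    intro p hp i
    exact le_trans (Finset.le_sup (f := fun i => (p i).length) (Finset.mem_univ i))
      (Finset.le_sup (f := fun p => Finset.univ.sup fun i => (p i).length)
        (hfin.mem_toFinset.2 hp))
  -- the finite prefix of w of length L in each coordinate
  set x : W A n := fun i => List.ofFn (fun k : Fin L => w i k) with hx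
  have hxlen : ∀ i, (x i).length = L := by intro i; simp [hx]
  have hxpref : ∀ (i : Fin n) (k : ℕ) (h : k < (x i).length), w i k = (x i).get ⟨k, h⟩ := by
    intro i k h
    simp [hx]
  have hxinf : ∃ u, w = catInf x u := (prefInf_iff x w).2 hxpref
  obtain ⟨p, hpP, w0, hxw0, hpw0, -⟩ := hmax.2 x
  -- p is a coordinatewise prefix of x
  have hpx : ∀ i, p i <+: x i := by
    intro i
    rw [initLE_iff] at hxw0 hpw0
    exact List.prefix_of_prefix_length_le (hpw0 i) (hxw0 i)
      (by rw [hxlen i]; exact hbound p hpP i)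
  -- hence p is an initial factor of w
  have hpinf : ∃ u, w = catInf p u := by
    rw [prefInf_iff]
    intro i k h
    have hklt : k < (x i).length := lt_of_lt_of_le h (hpx i).length_le
    rw [hxpref i k hklt]
    simp only [List.get_eq_getElem]
    exact (List.IsPrefix.getElem (hpx i) h).symm
  obtain ⟨u, hu⟩ := hpinf
  refine ⟨(p, u), ⟨hpP, hu⟩, ?_⟩
  rintro ⟨q, v⟩ ⟨hqP, hv⟩
  have hpq : q = p := by
    by_contra hne
    exact hmax.1 q hqP p hpP hne (hasJoin_of_prefInf ⟨v, hv⟩ ⟨u, hu⟩)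
  subst hpq
  have huv : v = u := by
    funext i k
    have h1 : catInf q v i (k + (q i).length) = catInf q u i (k + (q i).length) := by
      rw [← hv, ← hu]
    rwa [catInf_shift, catInf_shift] at h1
  rw [huv]

end BrinThompson
end

section
/- For every f ∈ n RI^fin_A: f(domC(f)) = imC(f). Consequently, the inverse function f⁻¹ (defined on Im(f)) also belongs to n RI^fin_A, with domC(f⁻¹) = imC(f) and imC(f⁻¹) = domC(f). -/
namespace BrinThompson

variable {A : Type*} {n : ℕ}

lemma cat_epsn (c : W A n) : cat c (epsn A n) = c := by
  funext i; simp [cat, epsn]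

lemma cat_assoc (u v w : W A n) : cat (cat u v) w = cat u (cat v w) := by
  funext i; simp [cat]

lemma initLE_refl (u : W A n) : initLE u u := ⟨epsn A n, (cat_epsn u).symm⟩

lemma initLE_trans {u v w : W A n} (h1 : initLE u v) (h2 : initLE v w) :
    initLE u w := by
  obtain ⟨x, rfl⟩ := h1; obtain ⟨y, rfl⟩ := h2
  exact ⟨cat x y, cat_assoc u x y⟩

lemma initLE_antisymm {u v : W A n} (h1 : initLE u v) (h2 : initLE v u) :
    u = v := by
  obtain ⟨x, rfl⟩ := h1
  obtain ⟨y, hy⟩ := h2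
  funext i
  have := congrFun hy i
  simp only [cat] at this ⊢
  have hx : x i ++ y i = [] := by
    have h3 : u i ++ ((x i) ++ (y i)) = u i ++ [] := by
      rw [List.append_assoc] at this; rw [← this]; simp
    exact List.append_cancel_left h3
  simp [List.append_eq_nil_iff.mp hx |>.1]

lemma joinless_le {S : Set (W A n)} (hS : JoinlessCode S)
    {u v : W A n} (hu : u ∈ S) (hv : v ∈ S) (h : initLE u v) : u = v := by
  by_contra hne
  exact hS u hu v hv hne ⟨v, h, initLE_refl v, fun z _ hz => hz⟩

lemma mem_genIdeal_self {C : Set (W A n)} {c : W A n} (hc : c ∈ C) :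
    c ∈ genIdeal C := ⟨c, hc, epsn A n, (cat_epsn c).symm⟩

lemma genIdeal_idem (C : Set (W A n)) : genIdeal (genIdeal C) = genIdeal C := by
  ext w
  constructor
  · rintro ⟨c, ⟨d, hd, x, rfl⟩, y, rfl⟩
    exact ⟨d, hd, cat x y, cat_assoc d x y⟩
  · exact fun h => mem_genIdeal_self h

lemma cat_mem_dom (F : RIMfin A n) {x : W A n} (hx : x ∈ F.Dom) (w : W A n) :
    cat x w ∈ F.Dom := by
  rw [← F.ideal]; exact ⟨x, hx, w, rfl⟩

lemma domC_subset_dom (F : RIMfin A n) : F.domC ⊆ F.Dom := by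
  intro d hd; rw [← F.domC_gen]; exact mem_genIdeal_self hd

/-- F reflects the initial-factor order on its domain. -/
lemma initLE_reflect (F : RIMfin A n) {x y : W A n} (hx : x ∈ F.Dom)
    (hy : y ∈ F.Dom) (h : initLE (F.toFun x) (F.toFun y)) : initLE x y := by
  obtain ⟨w, hw⟩ := h
  have : F.toFun y = F.toFun (cat x w) := by rw [F.morph x hx w]; exact hw
  have := F.inj hy (cat_mem_dom F hx w) this
  exact ⟨w, this⟩

lemma image_domC_eq_imC (F : RIMfin A n) : F.toFun '' F.domC = F.imC := by
  apply Set.eq_of_subset_of_subset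
  · rintro _ ⟨d, hd, rfl⟩
    have hdD : d ∈ F.Dom := domC_subset_dom F hd
    have hFd : F.toFun d ∈ genIdeal F.imC := by
      rw [F.imC_gen]; exact ⟨d, hdD, rfl⟩
    obtain ⟨q, hq, x, hx⟩ := hFd
    have hqIm : q ∈ F.toFun '' F.Dom := by
      rw [← F.imC_gen]; exact mem_genIdeal_self hq
    obtain ⟨y, hyD, rfl⟩ := hqIm
    have hyd : initLE y d := initLE_reflect F hyD hdD ⟨x, hx⟩
    have hyDom : y ∈ genIdeal F.domC := by rw [F.domC_gen]; exact hyD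
    obtain ⟨d', hd', z, rfl⟩ := hyDom
    have hd'd : initLE d' d := initLE_trans ⟨z, rfl⟩ hyd
    have : d' = d := joinless_le F.domC_max.1 hd' hd hd'd
    subst this
    have : cat d' z = d' := initLE_antisymm hyd ⟨z, rfl⟩
    rw [this] at hq; exact hq
  · intro q hq
    have hqIm : q ∈ F.toFun '' F.Dom := by
      rw [← F.imC_gen]; exact mem_genIdeal_self hq
    obtain ⟨y, hyD, rfl⟩ := hqIm
    have hyDom : y ∈ genIdeal F.domC := by rw [F.domC_gen]; exact hyD
    obtain ⟨d, hd, z, rfl⟩ := hyDom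
    have hdD : d ∈ F.Dom := domC_subset_dom F hd
    have hle : initLE (F.toFun d) (F.toFun (cat d z)) := by
      rw [F.morph d hdD z]; exact ⟨z, rfl⟩
    have hFd : F.toFun d ∈ genIdeal F.imC := by
      rw [F.imC_gen]; exact ⟨d, hdD, rfl⟩
    obtain ⟨q', hq', x, hx⟩ := hFd
    have hq'q : initLE q' (F.toFun (cat d z)) := initLE_trans ⟨x, hx⟩ hle
    have : q' = F.toFun (cat d z) := joinless_le F.imC_max.1 hq' hq hq'q
    subst this
    have hdeq : F.toFun d = F.toFun (cat d z) :=
      initLE_antisymm hle ⟨x, hx⟩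
    exact ⟨d, hd, hdeq⟩

/-- For `f ∈ n RI^fin_A`: `f(domC(f)) = imC(f)`, and the inverse of `f` also
belongs to `n RI^fin_A`, with `domC(f⁻¹) = imC(f)` and `imC(f⁻¹) = domC(f)`. -/
theorem image_domC_eq_imC_and_inverse {A : Type*} [Fintype A] [Nonempty A]
    {n : ℕ} (hn : 1 ≤ n) (F : RIMfin A n) :
    F.toFun '' F.domC = F.imC ∧
    ∃ G : RIMfin A n,
      G.Dom = F.toFun '' F.Dom ∧
      (∀ x ∈ F.Dom, G.toFun (F.toFun x) = x) ∧
      (∀ y ∈ G.Dom, F.toFun (G.toFun y) = y) ∧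
      G.domC = F.imC ∧ G.imC = F.domC := by
  refine ⟨image_domC_eq_imC F, ?_⟩
  have hne : Nonempty (W A n) := ⟨epsn A n⟩
  set g : W A n → W A n := Function.invFunOn F.toFun F.Dom with hg
  have hleft : ∀ x ∈ F.Dom, g (F.toFun x) = x := fun x hx =>
    F.inj.leftInvOn_invFunOn hx
  have himg : g '' (F.toFun '' F.Dom) = F.Dom := by
    apply Set.eq_of_subset_of_subset
    · rintro _ ⟨_, ⟨x, hx, rfl⟩, rfl⟩
      rw [hleft x hx]; exact hx
    · intro x hx
      exact ⟨F.toFun x, ⟨x, hx, rfl⟩, hleft x hx⟩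
  refine ⟨{
    Dom := F.toFun '' F.Dom
    toFun := g
    domC := F.imC
    imC := F.domC
    ideal := by
      rw [← F.imC_gen]; exact genIdeal_idem _
    morph := by
      rintro _ ⟨x, hx, rfl⟩ w
      have h1 : cat (F.toFun x) w = F.toFun (cat x w) := (F.morph x hx w).symm
      rw [h1, hleft _ (cat_mem_dom F hx w), hleft x hx]
    inj := by
      rintro _ ⟨x, hx, rfl⟩ _ ⟨y, hy, rfl⟩ h
      rw [hleft x hx, hleft y hy] at h; rw [h]
    domC_gen := F.imC_gen
    imC_gen := by rw [himg]; exact F.domC_gen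
    domC_fin := F.imC_fin
    domC_max := F.imC_max
    imC_fin := F.domC_fin
    imC_max := F.domC_max
  }, rfl, fun x hx => hleft x hx, ?_, rfl, rfl⟩
  rintro _ ⟨x, hx, rfl⟩
  show F.toFun (g (F.toFun x)) = F.toFun x
  rw [hleft x hx]

end BrinThompson
end
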